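/- Under the hypotheses of the n-nomial model (n > 2, m₁ > ... > mₙ > 0, m_{s−1} > 1+r > m_s, 1+r ≠ mₙ), the lower envelope Q̲ of the set of martingale measures is a belief function (completely monotone capacity), i.e., its Möbius inverse is nonnegative on all subsets of Ω. -/

import Mathlib

open Finset

/- ### Auxiliary combinatorial lemmas -/

lemma pm_powerset_sum {α : Type*} [DecidableEq α] (P : Finset α) :
    (∑ C ∈ P.powerset, (-1 : ℝ) ^ (P.card - C.card)) = if P = ∅ then 1 else 0 := by
  have h1 : ∀ C ∈ P.powerset, (-1 : ℝ) ^ (P.card - C.card)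
      = (-1 : ℝ) ^ P.card * (-1 : ℝ) ^ C.card := by
    intro C hC
    have hle : C.card ≤ P.card := card_le_card (mem_powerset.mp hC)
    have h2 : (-1 : ℝ) ^ (P.card - C.card) * (-1 : ℝ) ^ C.card = (-1 : ℝ) ^ P.card := by
      rw [← pow_add]; congr 1; omega
    have hunit : (-1 : ℝ) ^ C.card * (-1 : ℝ) ^ C.card = 1 := by
      rw [← pow_add, Even.neg_one_pow ⟨C.card, by ring⟩]
    calc (-1 : ℝ) ^ (P.card - C.card)
        = (-1 : ℝ) ^ (P.card - C.card) * ((-1 : ℝ) ^ C.card * (-1 : ℝ) ^ C.card) := by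
          rw [hunit, mul_one]
      _ = (-1 : ℝ) ^ P.card * (-1 : ℝ) ^ C.card := by rw [← mul_assoc, h2]
  rw [Finset.sum_congr rfl h1, ← Finset.mul_sum]
  have hz : (∑ C ∈ P.powerset, (-1 : ℝ) ^ C.card)
      = ((∑ C ∈ P.powerset, (-1 : ℤ) ^ C.card : ℤ) : ℝ) := by push_cast; rfl
  rw [hz, Finset.sum_powerset_neg_one_pow_card]
  by_cases h : P = ∅ <;> simp [h]

lemma moebius_indicator {α : Type*} [DecidableEq α] (A F : Finset α) :
    (∑ B ∈ A.powerset, (-1 : ℝ) ^ (A.card - B.card) * (if F ⊆ B then 1 else 0))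
      = if F = A then 1 else 0 := by
  by_cases hFA : F ⊆ A
  · have step : (∑ B ∈ A.powerset, (-1 : ℝ) ^ (A.card - B.card) * (if F ⊆ B then 1 else 0))
        = ∑ B ∈ A.powerset.filter (fun B => F ⊆ B), (-1 : ℝ) ^ (A.card - B.card) := by
      rw [Finset.sum_filter]
      refine Finset.sum_congr rfl fun B _ => ?_
      by_cases h : F ⊆ B <;> simp [h]
    rw [step]
    have key : (∑ B ∈ A.powerset.filter (fun B => F ⊆ B), (-1 : ℝ) ^ (A.card - B.card))
        = ∑ C ∈ (A \ F).powerset, (-1 : ℝ) ^ ((A \ F).card - C.card) := by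
      refine Finset.sum_nbij' (fun B => B \ F) (fun C => C ∪ F) ?_ ?_ ?_ ?_ ?_
      · intro B hB
        simp only [mem_filter, mem_powerset] at hB ⊢
        exact sdiff_subset_sdiff hB.1 (le_refl F)
      · intro C hC
        simp only [mem_filter, mem_powerset] at hC ⊢
        exact ⟨union_subset (hC.trans sdiff_subset) hFA, subset_union_right⟩
      · intro B hB
        simp only [mem_filter, mem_powerset] at hB
        show B \ F ∪ F = B
        rw [sdiff_union_of_subset hB.2]
      · intro C hC
        simp only [mem_powerset] at hC
        show (C ∪ F) \ F = C
        exact union_sdiff_cancel_right (disjoint_of_subset_left hC sdiff_disjoint)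
      · intro B hB
        simp only [mem_filter, mem_powerset] at hB
        show (-1 : ℝ) ^ (A.card - B.card) = (-1 : ℝ) ^ ((A \ F).card - (B \ F).card)
        congr 1
        have h1 : (A \ F).card = A.card - F.card := card_sdiff_of_subset hFA
        have h2 : (B \ F).card = B.card - F.card := card_sdiff_of_subset hB.2
        have h3 : F.card ≤ B.card := card_le_card hB.2
        have h4 : B.card ≤ A.card := card_le_card hB.1
        omega
    rw [key, pm_powerset_sum]
    have hiff : (A \ F = ∅) ↔ (F = A) := by
      rw [sdiff_eq_empty_iff_subset]
      exact ⟨fun h => subset_antisymm hFA h, fun h => by rw [h]⟩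
    by_cases h : F = A
    · simp [h, hiff.mpr h]
    · rw [if_neg h, if_neg (fun hc => h (hiff.mp hc))]
  · rw [if_neg (fun h => hFA (by rw [h]))]
    refine Finset.sum_eq_zero fun B hB => ?_
    rw [if_neg (fun h => hFA (h.trans (mem_powerset.mp hB))), mul_zero]

lemma two_point_wsum {n : ℕ} (A : Finset (Fin n)) (f : Fin n → ℝ) (i j : Fin n)
    (hij : i ≠ j) (x y : ℝ) :
    (∑ k ∈ A, f k * (if k = i then x else if k = j then y else 0))
      = (if i ∈ A then f i * x else 0) + (if j ∈ A then f j * y else 0) := by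
  have h : ∀ k ∈ A, f k * (if k = i then x else if k = j then y else 0)
      = (if k = i then f i * x else 0) + (if k = j then f j * y else 0) := by
    intro k _
    by_cases h1 : k = i
    · subst h1; simp [hij]
    · by_cases h2 : k = j
      · subst h2; simp [h1]
      · simp [h1, h2]
  rw [Finset.sum_congr rfl h, Finset.sum_add_distrib,
    Finset.sum_ite_eq' A i (fun _ => f i * x), Finset.sum_ite_eq' A j (fun _ => f j * y)]

lemma tele_a (f : ℕ → ℝ) (a b : ℕ) (h1 : 1 ≤ a) (h2 : a ≤ b) :
    (∑ j ∈ Finset.Ico a b, (f j - f (j - 1))) = f (b - 1) - f (a - 1) := by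
  rw [Finset.sum_Ico_eq_sum_range]
  have hkey : (∑ i ∈ Finset.range (b - a), (f (a - 1 + (i + 1)) - f (a - 1 + i)))
      = f (a - 1 + (b - a)) - f (a - 1 + 0) :=
    Finset.sum_range_sub (fun i => f (a - 1 + i)) (b - a)
  have h : ∀ i ∈ Finset.range (b - a),
      f (a + i) - f (a + i - 1) = f (a - 1 + (i + 1)) - f (a - 1 + i) := by
    intro i _
    have e1 : a + i = a - 1 + (i + 1) := by omega
    have e2 : a + i - 1 = a - 1 + i := by omega
    rw [e2, e1]
  rw [Finset.sum_congr rfl h, hkey]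
  have e1 : a - 1 + (b - a) = b - 1 := by omega
  have e2 : a - 1 + 0 = a - 1 := by omega
  rw [e1, e2]

lemma tele_b (f : ℕ → ℝ) (a b : ℕ) (h2 : a ≤ b) :
    (∑ j ∈ Finset.Ico a b, (f j - f (j + 1))) = f a - f b := by
  rw [Finset.sum_Ico_eq_sum_range]
  have hkey : (∑ i ∈ Finset.range (b - a), (f (a + i) - f (a + (i + 1))))
      = f (a + 0) - f (a + (b - a)) :=
    Finset.sum_range_sub' (fun i => f (a + i)) (b - a)
  have h : ∀ i ∈ Finset.range (b - a),
      f (a + i) - f (a + i + 1) = f (a + i) - f (a + (i + 1)) := by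
    intro i _
    have e2 : a + i + 1 = a + (i + 1) := by omega
    rw [e2]
  rw [Finset.sum_congr rfl h, hkey]
  have e1 : a + 0 = a := by omega
  have e2 : a + (b - a) = b := by omega
  rw [e1, e2]

/- ### Focal elements and Möbius masses -/

noncomputable def Mnat (n : ℕ) (m : Fin n → ℝ) (k : ℕ) : ℝ :=
  if h : k < n then m ⟨k, h⟩ else 0

noncomputable def aF (n : ℕ) (m : Fin n → ℝ) (c : ℝ) (sv j : ℕ) : ℝ :=
  if j < sv then 0 else (c - Mnat n m j) / (Mnat n m 0 - Mnat n m j)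

noncomputable def bF (n : ℕ) (m : Fin n → ℝ) (c : ℝ) (sv i : ℕ) : ℝ :=
  if sv ≤ i then 0 else (Mnat n m i - c) / (Mnat n m i - Mnat n m (n - 1))

noncomputable def massF (n : ℕ) (m : Fin n → ℝ) (c : ℝ) (sv t : ℕ) : ℝ :=
  if t < sv then bF n m c sv t - bF n m c sv (t + 1)
  else aF n m c sv t - aF n m c sv (t - 1)

def SetF (n sv : ℕ) (t : Fin n) : Finset (Fin n) :=
  if t.val < sv then Finset.univ.filter (fun k => t.val < k.val)
  else Finset.univ.filter (fun k => k.val < t.val)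

/- ### Main theorem -/

set_option maxHeartbeats 2000000 in
/-- The lower envelope of the set of martingale measures in the n-nomial model is a
belief function: its Möbius inverse is nonnegative on every subset of `Ω`. -/
theorem lower_envelope_is_belief_function (n : ℕ) (hn : 2 < n) (m : Fin n → ℝ)
    (hm : StrictAnti m) (hmpos : ∀ k, 0 < m k) (r : ℝ)
    (s : Fin n) (hs : 1 ≤ s.val)
    (h1 : 1 + r < m ⟨s.val - 1, Nat.lt_of_le_of_lt (Nat.sub_le _ _) s.isLt⟩)
    (h2 : m s < 1 + r)
    (hrn : 1 + r ≠ m ⟨n - 1, by omega⟩)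
    (Qlow : Finset (Fin n) → ℝ)
    (hQlow : ∀ A : Finset (Fin n),
      IsLeast {x : ℝ | ∃ q : Fin n → ℝ, (∀ k, 0 ≤ q k) ∧ (∑ k, q k) = 1 ∧
        (∑ k, m k * q k) = 1 + r ∧ x = ∑ k ∈ A, q k} (Qlow A)) :
    ∀ A : Finset (Fin n),
      0 ≤ ∑ B ∈ A.powerset, (-1 : ℝ) ^ (A.card - B.card) * Qlow B := by
  classical
  set c : ℝ := 1 + r with hc
  have hn0 : 0 < n := by omega
  have hsn : s.val < n := s.isLt
  have hsn1 : s.val ≤ n - 1 := by omega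
  -- monotonicity of m on ℕ indices
  have hMle : ∀ (i j : ℕ) (hi : i < n) (hj : j < n), i ≤ j → m ⟨j, hj⟩ ≤ m ⟨i, hi⟩ :=
    fun i j hi hj h => hm.antitone (Fin.mk_le_mk.mpr h)
  have hMlt : ∀ (i j : ℕ) (hi : i < n) (hj : j < n), i < j → m ⟨j, hj⟩ < m ⟨i, hi⟩ :=
    fun i j hi hj h => hm (Fin.mk_lt_mk.mpr h)
  -- values of Mnat
  have hMv : ∀ (k : ℕ) (h : k < n), Mnat n m k = m ⟨k, h⟩ := fun k h => dif_pos h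
  -- comparisons with c
  have hup : ∀ (k : ℕ) (hk : k < s.val), c < m ⟨k, lt_trans hk hsn⟩ := by
    intro k hk
    refine lt_of_lt_of_le h1 (hMle k (s.val - 1) _ _ (by omega))
  have hdn : ∀ (k : ℕ) (hk : k < n), s.val ≤ k → m ⟨k, hk⟩ < c := by
    intro k hk hks
    refine lt_of_le_of_lt ?_ h2
    have := hMle s.val k s.isLt hk hks
    rwa [Fin.eta] at this
  have htop : c < m ⟨0, hn0⟩ := hup 0 hs
  have hbot : m ⟨n - 1, by omega⟩ < c := hdn (n - 1) (by omega) hsn1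
  -- general bounds on m k
  have hktop : ∀ k : Fin n, m k ≤ m ⟨0, hn0⟩ := by
    intro k
    have := hMle 0 k.val hn0 k.isLt (Nat.zero_le _)
    rwa [Fin.eta] at this
  have hkbot : ∀ k : Fin n, m ⟨n - 1, by omega⟩ ≤ m k := by
    intro k
    have := hMle k.val (n - 1) k.isLt (by omega) (by omega)
    rwa [Fin.eta] at this
  -- nonnegativity of masses
  have haF_nonneg : ∀ j : ℕ, s.val ≤ j → j < n → 0 ≤ aF n m c s.val j := by
    intro j hj hjn
    rw [aF, if_neg (by omega), hMv j hjn, hMv 0 hn0]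
    have hjc : m ⟨j, hjn⟩ < c := hdn j hjn hj
    have : m ⟨j, hjn⟩ < m ⟨0, hn0⟩ := lt_trans hjc htop
    exact div_nonneg (by linarith) (by linarith)
  have haF_le_one : ∀ j : ℕ, s.val ≤ j → j < n → aF n m c s.val j ≤ 1 := by
    intro j hj hjn
    rw [aF, if_neg (by omega), hMv j hjn, hMv 0 hn0]
    have hjc : m ⟨j, hjn⟩ < c := hdn j hjn hj
    have hlt : m ⟨j, hjn⟩ < m ⟨0, hn0⟩ := lt_trans hjc htop
    rw [div_le_one (by linarith)]
    linarith
  have haF_mono : ∀ j j' : ℕ, s.val ≤ j → j ≤ j' → j' < n →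
      aF n m c s.val j ≤ aF n m c s.val j' := by
    intro j j' hj hjj hj'n
    have hjn : j < n := lt_of_le_of_lt hjj hj'n
    rw [aF, aF, if_neg (by omega), if_neg (by omega), hMv j hjn, hMv j' hj'n, hMv 0 hn0]
    set x := m ⟨j', hj'n⟩
    set y := m ⟨j, hjn⟩
    have hxy : x ≤ y := hMle j j' hjn hj'n hjj
    have hyc : y < c := hdn j hjn hj
    have hytop : y < m ⟨0, hn0⟩ := lt_trans hyc htop
    have hxtop : x < m ⟨0, hn0⟩ := lt_of_le_of_lt hxy hytop
    rw [div_le_div_iff₀ (by linarith) (by linarith)]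
    nlinarith [htop]
  have hbF_nonneg : ∀ i : ℕ, i < s.val → 0 ≤ bF n m c s.val i := by
    intro i hi
    have hin : i < n := lt_trans hi hsn
    rw [bF, if_neg (by omega), hMv i hin, hMv (n - 1) (by omega)]
    have hic : c < m ⟨i, hin⟩ := hup i hi
    have : m ⟨n - 1, by omega⟩ < m ⟨i, hin⟩ := lt_trans hbot hic
    exact div_nonneg (by linarith) (by linarith)
  have hbF_anti : ∀ i i' : ℕ, i ≤ i' → i' < s.val →
      bF n m c s.val i' ≤ bF n m c s.val i := by
    intro i i' hii hi'
    have hi : i < s.val := lt_of_le_of_lt hii hi'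
    have hin : i < n := lt_trans hi hsn
    have hi'n : i' < n := lt_trans hi' hsn
    rw [bF, bF, if_neg (by omega), if_neg (by omega), hMv i hin, hMv i' hi'n,
      hMv (n - 1) (by omega)]
    set x := m ⟨i, hin⟩
    set y := m ⟨i', hi'n⟩
    have hxy : y ≤ x := hMle i i' hin hi'n hii
    have hyc : c < y := hup i' hi'
    have hybot : m ⟨n - 1, by omega⟩ < y := lt_trans hbot hyc
    have hxbot : m ⟨n - 1, by omega⟩ < x := lt_of_lt_of_le hybot hxy
    rw [div_le_div_iff₀ (by linarith) (by linarith)]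
    nlinarith [hbot]
  have hmass_nonneg : ∀ t : Fin n, 0 ≤ massF n m c s.val t.val := by
    intro t
    rw [massF]
    by_cases ht : t.val < s.val
    · rw [if_pos ht]
      by_cases ht1 : t.val + 1 < s.val
      · linarith [hbF_anti t.val (t.val + 1) (by omega) ht1]
      · have : bF n m c s.val (t.val + 1) = 0 := by rw [bF, if_pos (by omega)]
        rw [this]
        linarith [hbF_nonneg t.val ht]
    · rw [if_neg ht]
      by_cases ht1 : t.val - 1 < s.val
      · have : aF n m c s.val (t.val - 1) = 0 := by rw [aF, if_pos ht1]
        rw [this]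
        linarith [haF_nonneg t.val (by omega) t.isLt]
      · linarith [haF_mono (t.val - 1) t.val (by omega) (by omega) t.isLt]
  -- the key representation of Qlow
  have key : ∀ A : Finset (Fin n),
      Qlow A = ∑ t : Fin n, massF n m c s.val t.val *
        (if SetF n s.val t ⊆ A then (1 : ℝ) else 0) := by
    intro A
    obtain ⟨hmem, hlb⟩ := hQlow A
    obtain ⟨q0, hq0pos, hq0sum, hq0mart, hq0x⟩ := hmem
    -- witness construction
    have hwit : ∀ (i j : Fin n), i ≠ j → m j < c → c < m i →
        ((if i ∈ A then (c - m j) / (m i - m j) else 0) +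
          (if j ∈ A then (m i - c) / (m i - m j) else 0)) ∈
          {x : ℝ | ∃ q : Fin n → ℝ, (∀ k, 0 ≤ q k) ∧ (∑ k, q k) = 1 ∧
            (∑ k, m k * q k) = c ∧ x = ∑ k ∈ A, q k} := by
      intro i j hij hjc hic
      have hmij : m j < m i := lt_trans hjc hic
      have hd : (0 : ℝ) < m i - m j := by linarith
      have hne : m i - m j ≠ 0 := ne_of_gt hd
      refine ⟨fun k => if k = i then (c - m j) / (m i - m j)
        else if k = j then (m i - c) / (m i - m j) else 0, ?_, ?_, ?_, ?_⟩
      · intro k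
        dsimp only
        split_ifs with hki hkj
        · exact div_nonneg (by linarith) (by linarith)
        · exact div_nonneg (by linarith) (by linarith)
        · exact le_refl 0
      · have := two_point_wsum Finset.univ (fun _ => (1 : ℝ)) i j hij
          ((c - m j) / (m i - m j)) ((m i - c) / (m i - m j))
        simp only [one_mul, Finset.mem_univ, if_true] at this
        rw [this, ← add_div, div_eq_one_iff_eq hne]
        ring
      · have := two_point_wsum Finset.univ m i j hij
          ((c - m j) / (m i - m j)) ((m i - c) / (m i - m j))
        simp only [Finset.mem_univ, if_true] at this
        rw [this]
        rw [← mul_div_assoc, ← mul_div_assoc, ← add_div, div_eq_iff hne]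
        ring
      · have := two_point_wsum A (fun _ => (1 : ℝ)) i j hij
          ((c - m j) / (m i - m j)) ((m i - c) / (m i - m j))
        simp only [one_mul] at this
        rw [this]
    by_cases hU : ∀ k : Fin n, k.val < s.val → k ∈ A
    · by_cases hD : ∀ k : Fin n, s.val ≤ k.val → k ∈ A
      -- Case A = univ
      · have hAuniv : A = Finset.univ := by
          refine Finset.eq_univ_of_forall fun k => ?_
          by_cases h : k.val < s.val
          · exact hU k h
          · exact hD k (by omega)
        have hval : Qlow A = 1 := by
          rw [hq0x, hAuniv, hq0sum]
        have hsub : ∀ t : Fin n, SetF n s.val t ⊆ A := by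
          intro t; rw [hAuniv]; exact Finset.subset_univ _
        have hrhs : (∑ t : Fin n, massF n m c s.val t.val *
            (if SetF n s.val t ⊆ A then (1 : ℝ) else 0))
            = ∑ t : Fin n, massF n m c s.val t.val := by
          refine Finset.sum_congr rfl fun t _ => ?_
          rw [if_pos (hsub t), mul_one]
        rw [hval, hrhs, Fin.sum_univ_eq_sum_range (fun j => massF n m c s.val j) n]
        rw [Finset.range_eq_Ico, ← Finset.sum_Ico_consecutive _ (Nat.zero_le s.val) (le_of_lt hsn)]
        have e1 : (∑ j ∈ Finset.Ico 0 s.val, massF n m c s.val j)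
            = bF n m c s.val 0 - bF n m c s.val s.val := by
          rw [← tele_b (bF n m c s.val) 0 s.val (Nat.zero_le _)]
          refine Finset.sum_congr rfl fun j hj => ?_
          rw [Finset.mem_Ico] at hj
          rw [massF, if_pos hj.2]
        have e2 : (∑ j ∈ Finset.Ico s.val n, massF n m c s.val j)
            = aF n m c s.val (n - 1) - aF n m c s.val (s.val - 1) := by
          rw [← tele_a (aF n m c s.val) s.val n hs (le_of_lt hsn)]
          refine Finset.sum_congr rfl fun j hj => ?_
          rw [Finset.mem_Ico] at hj
          rw [massF, if_neg (by omega)]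
        rw [e1, e2]
        have z1 : bF n m c s.val s.val = 0 := by rw [bF, if_pos (le_refl _)]
        have z2 : aF n m c s.val (s.val - 1) = 0 := by rw [aF, if_pos (by omega)]
        rw [z1, z2, sub_zero, sub_zero]
        rw [bF, if_neg (by omega), aF, if_neg (by omega), hMv 0 hn0, hMv (n-1) (by omega)]
        have hlt : m ⟨n - 1, by omega⟩ < m ⟨0, hn0⟩ := lt_trans hbot htop
        have hne : m ⟨0, hn0⟩ - m ⟨n - 1, by omega⟩ ≠ 0 := by
          intro h; rw [sub_eq_zero] at h; exact absurd h (ne_of_gt hlt)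
        rw [← add_div, eq_comm, div_eq_one_iff_eq hne]
        ring
      -- Case U ⊆ A, some down state missing
      · push_neg at hD
        obtain ⟨k0, hk0s, hk0A⟩ := hD
        have hcne : (Finset.univ \ A).Nonempty :=
          ⟨k0, Finset.mem_sdiff.mpr ⟨Finset.mem_univ _, hk0A⟩⟩
        set js : Fin n := (Finset.univ \ A).min' hcne with hjs
        have hjsA : js ∉ A := (Finset.mem_sdiff.mp ((Finset.univ \ A).min'_mem hcne)).2
        have hjsmin : ∀ k : Fin n, k ∉ A → js.val ≤ k.val := by
          intro k hk
          exact (Finset.min'_le _ k (Finset.mem_sdiff.mpr ⟨Finset.mem_univ _, hk⟩) : js ≤ k)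
        have hjss : s.val ≤ js.val := by
          by_contra h
          exact hjsA (hU js (by omega))
        -- evaluate RHS
        have hterm : ∀ t : Fin n, massF n m c s.val t.val *
            (if SetF n s.val t ⊆ A then (1 : ℝ) else 0)
            = (fun j => if s.val ≤ j ∧ j ≤ js.val then massF n m c s.val j else 0) t.val := by
          intro t
          simp only []
          by_cases ht : t.val < s.val
          · have hns : ¬ (SetF n s.val t ⊆ A) := by
              intro hsub
              exact hjsA (hsub (by
                rw [SetF, if_pos ht, Finset.mem_filter]
                exact ⟨Finset.mem_univ _, by omega⟩))
            rw [if_neg hns, if_neg (by omega), mul_zero]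
          · by_cases htj : t.val ≤ js.val
            · have hsub : SetF n s.val t ⊆ A := by
                intro k hk
                rw [SetF, if_neg ht, Finset.mem_filter] at hk
                by_contra hkA
                have := hjsmin k hkA
                omega
              rw [if_pos hsub, if_pos ⟨by omega, htj⟩, mul_one]
            · have hns : ¬ (SetF n s.val t ⊆ A) := by
                intro hsub
                exact hjsA (hsub (by
                  rw [SetF, if_neg ht, Finset.mem_filter]
                  exact ⟨Finset.mem_univ _, by omega⟩))
              rw [if_neg hns, if_neg (by omega), mul_zero]
        have hrhs : (∑ t : Fin n, massF n m c s.val t.val *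
            (if SetF n s.val t ⊆ A then (1 : ℝ) else 0)) = aF n m c s.val js.val := by
          rw [Finset.sum_congr rfl (fun t _ => hterm t),
            Fin.sum_univ_eq_sum_range (fun j => if s.val ≤ j ∧ j ≤ js.val
              then massF n m c s.val j else 0) n]
          rw [Finset.range_eq_Ico,
            ← Finset.sum_Ico_consecutive _ (Nat.zero_le s.val) (le_of_lt hsn),
            ← Finset.sum_Ico_consecutive _ (show s.val ≤ js.val + 1 by omega)
              (show js.val + 1 ≤ n by have := js.isLt; omega)]
          have e1 : (∑ j ∈ Finset.Ico 0 s.val, if s.val ≤ j ∧ j ≤ js.val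
              then massF n m c s.val j else 0) = 0 := by
            refine Finset.sum_eq_zero fun j hj => ?_
            rw [Finset.mem_Ico] at hj
            rw [if_neg (by omega)]
          have e3 : (∑ j ∈ Finset.Ico (js.val + 1) n, if s.val ≤ j ∧ j ≤ js.val
              then massF n m c s.val j else 0) = 0 := by
            refine Finset.sum_eq_zero fun j hj => ?_
            rw [Finset.mem_Ico] at hj
            rw [if_neg (by omega)]
          have e2 : (∑ j ∈ Finset.Ico s.val (js.val + 1), if s.val ≤ j ∧ j ≤ js.val
              then massF n m c s.val j else 0)
              = aF n m c s.val (js.val + 1 - 1) - aF n m c s.val (s.val - 1) := by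
            rw [← tele_a (aF n m c s.val) s.val (js.val + 1) hs (by omega)]
            refine Finset.sum_congr rfl fun j hj => ?_
            rw [Finset.mem_Ico] at hj
            rw [if_pos ⟨hj.1, by omega⟩, massF, if_neg (by omega)]
          rw [e1, e2, e3, add_zero, zero_add]
          simp only [Nat.add_sub_cancel]
          rw [show aF n m c s.val (s.val - 1) = 0 from by rw [aF, if_pos (by omega)], sub_zero]
        rw [hrhs]
        -- value of aF at js
        have hjsn : js.val < n := js.isLt
        have haval : aF n m c s.val js.val = (c - m js) / (m ⟨0, hn0⟩ - m js) := by
          rw [aF, if_neg (by omega), hMv js.val hjsn, hMv 0 hn0, Fin.eta]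
        have hjc : m js < c := by
          have := hdn js.val hjsn hjss
          rwa [Fin.eta] at this
        -- the two directions
        have hi0 : (⟨0, hn0⟩ : Fin n) ∈ A := hU _ hs
        have hij : (⟨0, hn0⟩ : Fin n) ≠ js := by
          intro h
          exact hjsA (h ▸ hi0)
        have hle1 : Qlow A ≤ aF n m c s.val js.val := by
          have hw := hwit ⟨0, hn0⟩ js hij hjc htop
          have := hlb hw
          rw [if_pos hi0, if_neg hjsA, add_zero] at this
          rw [haval]
          exact this
        have hle2 : aF n m c s.val js.val ≤ Qlow A := by
          rw [haval, hq0x]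
          set p := m js
          set t0 := m ⟨0, hn0⟩
          have hd : (0 : ℝ) < t0 - p := by
            have : p < t0 := lt_trans hjc htop
            linarith
          rw [div_le_iff₀ hd]
          have hpt : ∀ k : Fin n, (m k - p) * q0 k
              ≤ (if k ∈ A then q0 k else 0) * (t0 - p) := by
            intro k
            by_cases hk : k ∈ A
            · rw [if_pos hk]
              have h1 : m k ≤ t0 := hktop k
              nlinarith [hq0pos k]
            · rw [if_neg hk, zero_mul]
              have h1 : js.val ≤ k.val := hjsmin k hk
              have h2 : m k ≤ p := by
                have := hMle js.val k.val js.isLt k.isLt h1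
                rw [Fin.eta, Fin.eta] at this
                exact this
              nlinarith [hq0pos k]
          have hsum := Finset.sum_le_sum (fun k (_ : k ∈ Finset.univ) => hpt k)
          have hL : (∑ k : Fin n, (m k - p) * q0 k) = c - p := by
            have : (∑ k : Fin n, (m k - p) * q0 k)
                = (∑ k : Fin n, m k * q0 k) - p * (∑ k : Fin n, q0 k) := by
              rw [Finset.mul_sum, ← Finset.sum_sub_distrib]
              exact Finset.sum_congr rfl fun k _ => by ring
            rw [this, hq0mart, hq0sum, mul_one]
          have hR : (∑ k : Fin n, (if k ∈ A then q0 k else 0) * (t0 - p))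
              = (∑ k ∈ A, q0 k) * (t0 - p) := by
            rw [← Finset.sum_mul]
            congr 1
            rw [Finset.sum_ite_mem, Finset.univ_inter]
          rw [hL, hR] at hsum
          exact hsum
        rw [le_antisymm hle1 hle2]
    · by_cases hD : ∀ k : Fin n, s.val ≤ k.val → k ∈ A
      -- Case D ⊆ A, some up state missing
      · push_neg at hU
        obtain ⟨k0, hk0s, hk0A⟩ := hU
        have hcne : (Finset.univ \ A).Nonempty :=
          ⟨k0, Finset.mem_sdiff.mpr ⟨Finset.mem_univ _, hk0A⟩⟩
        set is : Fin n := (Finset.univ \ A).max' hcne with his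
        have hisA : is ∉ A := (Finset.mem_sdiff.mp ((Finset.univ \ A).max'_mem hcne)).2
        have hismax : ∀ k : Fin n, k ∉ A → k.val ≤ is.val := by
          intro k hk
          exact (Finset.le_max' _ k (Finset.mem_sdiff.mpr ⟨Finset.mem_univ _, hk⟩) : k ≤ is)
        have hiss : is.val < s.val := by
          by_contra h
          exact hisA (hD is (by omega))
        -- evaluate RHS
        have hterm : ∀ t : Fin n, massF n m c s.val t.val *
            (if SetF n s.val t ⊆ A then (1 : ℝ) else 0)
            = (fun j => if is.val ≤ j ∧ j < s.val then massF n m c s.val j else 0) t.val := by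
          intro t
          simp only []
          by_cases ht : t.val < s.val
          · by_cases hti : is.val ≤ t.val
            · have hsub : SetF n s.val t ⊆ A := by
                intro k hk
                rw [SetF, if_pos ht, Finset.mem_filter] at hk
                by_contra hkA
                have := hismax k hkA
                omega
              rw [if_pos hsub, if_pos ⟨hti, ht⟩, mul_one]
            · have hns : ¬ (SetF n s.val t ⊆ A) := by
                intro hsub
                exact hisA (hsub (by
                  rw [SetF, if_pos ht, Finset.mem_filter]
                  exact ⟨Finset.mem_univ _, by omega⟩))
              rw [if_neg hns, if_neg (by omega), mul_zero]
          · have hns : ¬ (SetF n s.val t ⊆ A) := by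
              intro hsub
              exact hisA (hsub (by
                rw [SetF, if_neg ht, Finset.mem_filter]
                exact ⟨Finset.mem_univ _, by omega⟩))
            rw [if_neg hns, if_neg (by omega), mul_zero]
        have hrhs : (∑ t : Fin n, massF n m c s.val t.val *
            (if SetF n s.val t ⊆ A then (1 : ℝ) else 0)) = bF n m c s.val is.val := by
          rw [Finset.sum_congr rfl (fun t _ => hterm t),
            Fin.sum_univ_eq_sum_range (fun j => if is.val ≤ j ∧ j < s.val
              then massF n m c s.val j else 0) n]
          rw [Finset.range_eq_Ico,
            ← Finset.sum_Ico_consecutive _ (Nat.zero_le is.val)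
              (show is.val ≤ n by omega),
            ← Finset.sum_Ico_consecutive _ (show is.val ≤ s.val by omega)
              (le_of_lt hsn)]
          have e1 : (∑ j ∈ Finset.Ico 0 is.val, if is.val ≤ j ∧ j < s.val
              then massF n m c s.val j else 0) = 0 := by
            refine Finset.sum_eq_zero fun j hj => ?_
            rw [Finset.mem_Ico] at hj
            rw [if_neg (by omega)]
          have e3 : (∑ j ∈ Finset.Ico s.val n, if is.val ≤ j ∧ j < s.val
              then massF n m c s.val j else 0) = 0 := by
            refine Finset.sum_eq_zero fun j hj => ?_
            rw [Finset.mem_Ico] at hj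
            rw [if_neg (by omega)]
          have e2 : (∑ j ∈ Finset.Ico is.val s.val, if is.val ≤ j ∧ j < s.val
              then massF n m c s.val j else 0)
              = bF n m c s.val is.val - bF n m c s.val s.val := by
            rw [← tele_b (bF n m c s.val) is.val s.val (by omega)]
            refine Finset.sum_congr rfl fun j hj => ?_
            rw [Finset.mem_Ico] at hj
            rw [if_pos ⟨hj.1, hj.2⟩, massF, if_pos hj.2]
          rw [e1, e2, e3, add_zero, zero_add]
          rw [show bF n m c s.val s.val = 0 from by rw [bF, if_pos (le_refl _)], sub_zero]
        rw [hrhs]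
        -- value of bF at is
        have hisn : is.val < n := is.isLt
        have hbval : bF n m c s.val is.val
            = (m is - c) / (m is - m ⟨n - 1, by omega⟩) := by
          rw [bF, if_neg (by omega), hMv is.val hisn, hMv (n - 1) (by omega), Fin.eta]
        have hic : c < m is := by
          have := hup is.val hiss
          rwa [Fin.eta] at this
        have hjlast : (⟨n - 1, by omega⟩ : Fin n) ∈ A := hD ⟨n - 1, by omega⟩ hsn1
        have hij : is ≠ (⟨n - 1, by omega⟩ : Fin n) := by
          intro h
          exact hisA (h ▸ hjlast)
        have hle1 : Qlow A ≤ bF n m c s.val is.val := by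
          have hw := hwit is ⟨n - 1, by omega⟩ hij hbot hic
          have := hlb hw
          rw [if_neg hisA, if_pos hjlast, zero_add] at this
          rw [hbval]
          exact this
        have hle2 : bF n m c s.val is.val ≤ Qlow A := by
          rw [hbval, hq0x]
          set p := m is
          set b0 := m ⟨n - 1, by omega⟩
          have hd : (0 : ℝ) < p - b0 := by
            have : b0 < p := lt_trans hbot hic
            linarith
          rw [div_le_iff₀ hd]
          have hpt : ∀ k : Fin n, (p - m k) * q0 k
              ≤ (if k ∈ A then q0 k else 0) * (p - b0) := by
            intro k
            by_cases hk : k ∈ A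
            · rw [if_pos hk]
              have h1 : b0 ≤ m k := hkbot k
              nlinarith [hq0pos k]
            · rw [if_neg hk, zero_mul]
              have h1 : k.val ≤ is.val := hismax k hk
              have h2 : p ≤ m k := by
                have := hMle k.val is.val k.isLt is.isLt h1
                rw [Fin.eta, Fin.eta] at this
                exact this
              nlinarith [hq0pos k]
          have hsum := Finset.sum_le_sum (fun k (_ : k ∈ Finset.univ) => hpt k)
          have hL : (∑ k : Fin n, (p - m k) * q0 k) = p - c := by
            have : (∑ k : Fin n, (p - m k) * q0 k)
                = p * (∑ k : Fin n, q0 k) - (∑ k : Fin n, m k * q0 k) := by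
              rw [Finset.mul_sum, ← Finset.sum_sub_distrib]
              exact Finset.sum_congr rfl fun k _ => by ring
            rw [this, hq0mart, hq0sum, mul_one]
          have hR : (∑ k : Fin n, (if k ∈ A then q0 k else 0) * (p - b0))
              = (∑ k ∈ A, q0 k) * (p - b0) := by
            rw [← Finset.sum_mul]
            congr 1
            rw [Finset.sum_ite_mem, Finset.univ_inter]
          rw [hL, hR] at hsum
          exact hsum
        rw [le_antisymm hle1 hle2]
      -- Case both an up state and a down state missing: Qlow A = 0
      · push_neg at hU hD
        obtain ⟨ku, hkus, hkuA⟩ := hU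
        obtain ⟨kd, hkds, hkdA⟩ := hD
        have hrhs : (∑ t : Fin n, massF n m c s.val t.val *
            (if SetF n s.val t ⊆ A then (1 : ℝ) else 0)) = 0 := by
          refine Finset.sum_eq_zero fun t _ => ?_
          have hns : ¬ (SetF n s.val t ⊆ A) := by
            intro hsub
            by_cases ht : t.val < s.val
            · exact hkdA (hsub (by
                rw [SetF, if_pos ht, Finset.mem_filter]
                exact ⟨Finset.mem_univ _, by omega⟩))
            · exact hkuA (hsub (by
                rw [SetF, if_neg ht, Finset.mem_filter]
                exact ⟨Finset.mem_univ _, by omega⟩))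
          rw [if_neg hns, mul_zero]
        rw [hrhs]
        have hkuc : c < m ku := by
          have := hup ku.val hkus
          rwa [Fin.eta] at this
        have hkdc : m kd < c := hdn kd.val kd.isLt hkds
        have hij : ku ≠ kd := by
          intro h
          rw [h] at hkuc
          linarith
        have hle1 : Qlow A ≤ 0 := by
          have hw := hwit ku kd hij hkdc hkuc
          have := hlb hw
          rw [if_neg hkuA, if_neg hkdA, add_zero] at this
          exact this
        have hle2 : (0 : ℝ) ≤ Qlow A := by
          rw [hq0x]
          exact Finset.sum_nonneg fun k _ => hq0pos k
        linarith
  -- conclusion via Möbius inversion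
  intro A
  have hsum : (∑ B ∈ A.powerset, (-1 : ℝ) ^ (A.card - B.card) * Qlow B)
      = ∑ t : Fin n, massF n m c s.val t.val *
        (if SetF n s.val t = A then (1 : ℝ) else 0) := by
    calc (∑ B ∈ A.powerset, (-1 : ℝ) ^ (A.card - B.card) * Qlow B)
        = ∑ B ∈ A.powerset, ∑ t : Fin n, massF n m c s.val t.val *
            ((-1 : ℝ) ^ (A.card - B.card) * (if SetF n s.val t ⊆ B then 1 else 0)) := by
          refine Finset.sum_congr rfl fun B _ => ?_
          rw [key B, Finset.mul_sum]
          refine Finset.sum_congr rfl fun t _ => ?_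
          ring
      _ = ∑ t : Fin n, ∑ B ∈ A.powerset, massF n m c s.val t.val *
            ((-1 : ℝ) ^ (A.card - B.card) * (if SetF n s.val t ⊆ B then 1 else 0)) :=
          Finset.sum_comm
      _ = ∑ t : Fin n, massF n m c s.val t.val *
            (if SetF n s.val t = A then (1 : ℝ) else 0) := by
          refine Finset.sum_congr rfl fun t _ => ?_
          rw [← Finset.mul_sum, moebius_indicator A (SetF n s.val t)]
  rw [hsum]
  refine Finset.sum_nonneg fun t _ => ?_
  by_cases h : SetF n s.val t = A
  · rw [if_pos h, mul_one]
    exact hmass_nonneg t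
  · rw [if_neg h, mul_zero]
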